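/- arXiv:2504.07270 — 2 statements merged into one kernel-verified Lean document; each statement's English description precedes it below -/
import Mathlib

section
/- Let p : ℂ[X] be the cubic polynomial z^3 + a*z + b where a is real and b is a positive real. Then p has no purely imaginary roots (including 0), and exactly one of its three roots (counted with multiplicity) has negative real part. -/
open Polynomial

private lemma exactly_one_neg' (u v w : ℝ) (hs : u + v + w = 0) (hp : u * v * w < 0) :
    (u < 0 ∧ 0 < v ∧ 0 < w) ∨ (0 < u ∧ v < 0 ∧ 0 < w) ∨ (0 < u ∧ 0 < v ∧ w < 0) := by
  rcases lt_trichotomy u 0 with hu | hu | hu <;>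
  rcases lt_trichotomy v 0 with hv | hv | hv <;>
  rcases lt_trichotomy w 0 with hw | hw | hw <;>
  first
    | exact Or.inl ⟨‹_›, ‹_›, ‹_›⟩
    | exact Or.inr (Or.inl ⟨‹_›, ‹_›, ‹_›⟩)
    | exact Or.inr (Or.inr ⟨‹_›, ‹_›, ‹_›⟩)
    | (exfalso; first
        | simp_all
        | nlinarith [mul_pos_of_neg_of_neg hu hv]
        | nlinarith [mul_pos_of_neg_of_neg hu hw]
        | nlinarith [mul_pos_of_neg_of_neg hv hw]
        | nlinarith)

private lemma pair_case' (b : ℝ) (hb : 0 < b) (x z : ℂ)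
    (hs : x + (starRingEnd ℂ) x + z = 0)
    (hp : x * (starRingEnd ℂ) x * z = -(b : ℂ)) :
    0 < x.re ∧ z.re < 0 := by
  have h1 : x * (starRingEnd ℂ) x = (Complex.normSq x : ℂ) := Complex.mul_conj x
  rw [h1] at hp
  have hre : Complex.normSq x * z.re = -b := by
    have := congrArg Complex.re hp
    simpa using this
  have hn : 0 < Complex.normSq x := by
    rcases (Complex.normSq_nonneg x).lt_or_eq with h | h
    · exact h
    · exfalso; rw [← h, zero_mul] at hre; linarith
  have hz : z.re < 0 := by nlinarith
  have hs' : x.re + x.re + z.re = 0 := by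
    have := congrArg Complex.re hs
    simpa using this
  constructor <;> linarith

/-- The cubic `z^3 + a z + b` with `a` real and `b > 0` real has no purely imaginary
roots (including `0`), and exactly one of its three roots (with multiplicity) has
negative real part. -/
theorem stmt_0 (a b : ℝ) (hb : 0 < b)
    (p : Polynomial ℂ) (hp : p = X ^ 3 + C (a : ℂ) * X + C (b : ℂ)) :
    (∀ z ∈ p.roots, z.re ≠ 0) ∧
      (p.roots.filter (fun z => z.re < 0)).card = 1 := by
  have hmonic : p.Monic := by rw [hp]; monicity!
  have hdeg : p.natDegree = 3 := by rw [hp]; compute_degree!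
  have hp0 : p ≠ 0 := hmonic.ne_zero
  have hsplits : p.Splits := IsAlgClosed.splits p
  have hcard : p.roots.card = 3 := by
    rw [Polynomial.splits_iff_card_roots.mp hsplits, hdeg]
  obtain ⟨x, y, z, hroots⟩ := Multiset.card_eq_three.mp hcard
  -- root characterization
  have hmem : ∀ w : ℂ, w ∈ p.roots ↔ w ^ 3 + a * w + b = 0 := by
    intro w
    rw [Polynomial.mem_roots hp0, Polynomial.IsRoot, hp]
    simp
  -- no root on the imaginary axis
  have part1 : ∀ w ∈ p.roots, w.re ≠ 0 := by
    intro w hw hre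
    have heq := (hmem w).1 hw
    have hR := congrArg Complex.re heq
    simp [pow_succ, Complex.mul_re, Complex.mul_im, Complex.add_re, hre] at hR
    exact absurd hR hb.ne'
  refine ⟨part1, ?_⟩
  -- roots are closed under conjugation
  have hconj : ∀ w ∈ p.roots, (starRingEnd ℂ) w ∈ p.roots := by
    intro w hw
    rw [hmem] at hw ⊢
    have : (starRingEnd ℂ) (w ^ 3 + a * w + b) = 0 := by rw [hw]; simp
    simpa [map_add, map_mul, map_pow, Complex.conj_ofReal] using this
  -- factorization
  have hfac : p = (X - C x) * ((X - C y) * (X - C z)) := by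
    have h := hsplits.eq_prod_roots_of_monic hmonic
    rw [hroots] at h
    simpa using h
  -- Vieta via evaluations
  have e0 : (0 - x) * ((0 - y) * (0 - z)) = (b : ℂ) := by
    have := congrArg (Polynomial.eval 0) hfac
    rw [hp] at this
    simpa using this.symm
  have e1 : (1 - x) * ((1 - y) * (1 - z)) = 1 + a + b := by
    have := congrArg (Polynomial.eval 1) hfac
    rw [hp] at this
    simpa using this.symm
  have e2 : (-1 - x) * ((-1 - y) * (-1 - z)) = -1 - (a : ℂ) + b := by
    have h := congrArg (Polynomial.eval (-1)) hfac
    rw [hp] at h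
    simp only [eval_add, eval_mul, eval_pow, eval_X, eval_C, eval_sub, eval_neg, eval_one] at h
    linear_combination -h
  have hsum : x + y + z = 0 := by linear_combination (-e1 - e2) / 2 + e0
  have hprod : x * y * z = -(b : ℂ) := by linear_combination -e0
  -- memberships
  have hxm : x ∈ p.roots := by rw [hroots]; simp
  have hym : y ∈ p.roots := by rw [hroots]; simp
  have hzm : z ∈ p.roots := by rw [hroots]; simp
  have hxr := part1 x hxm
  have hyr := part1 y hym
  have hzr := part1 z hzm
  have hcx : (starRingEnd ℂ) x = x ∨ (starRingEnd ℂ) x = y ∨ (starRingEnd ℂ) x = z := by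
    have := hconj x hxm; rw [hroots] at this; simpa using this
  have hcy : (starRingEnd ℂ) y = x ∨ (starRingEnd ℂ) y = y ∨ (starRingEnd ℂ) y = z := by
    have := hconj y hym; rw [hroots] at this; simpa using this
  have hcz : (starRingEnd ℂ) z = x ∨ (starRingEnd ℂ) z = y ∨ (starRingEnd ℂ) z = z := by
    have := hconj z hzm; rw [hroots] at this; simpa using this
  -- exactly one root has negative real part
  have key : (x.re < 0 ∧ 0 < y.re ∧ 0 < z.re) ∨ (0 < x.re ∧ y.re < 0 ∧ 0 < z.re) ∨
      (0 < x.re ∧ 0 < y.re ∧ z.re < 0) := by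
    by_cases hx : (starRingEnd ℂ) x = x
    · by_cases hy : (starRingEnd ℂ) y = y
      · by_cases hz : (starRingEnd ℂ) z = z
        · -- all real
          have hxi : x.im = 0 := Complex.conj_eq_iff_im.mp hx
          have hyi : y.im = 0 := Complex.conj_eq_iff_im.mp hy
          have hzi : z.im = 0 := Complex.conj_eq_iff_im.mp hz
          have hS : x.re + y.re + z.re = 0 := by
            have := congrArg Complex.re hsum; simpa using this
          have hP : x.re * y.re * z.re = -b := by
            have := congrArg Complex.re hprod
            simpa [Complex.mul_re, Complex.mul_im, hxi, hyi, hzi] using this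
          exact exactly_one_neg' _ _ _ hS (by linarith [hP])
        · -- z not real: conj z = x or conj z = y, both force z real, contradiction
          exfalso
          rcases hcz with h | h | h
          · have hzx : z = x := by rw [← Complex.conj_conj z, h]; exact hx
            exact hz (by rw [hzx]; exact hx)
          · have hzy : z = y := by rw [← Complex.conj_conj z, h]; exact hy
            exact hz (by rw [hzy]; exact hy)
          · exact hz h
      · -- y not real: conj y = x forces y real; so conj y = z, pair (y, z)
        rcases hcy with h | h | h
        · have hyx : y = x := by rw [← Complex.conj_conj y, h]; exact hx
          exact absurd (by rw [hyx]; exact hx) hy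
        · exact absurd h hy
        · have hs' : y + (starRingEnd ℂ) y + x = 0 := by rw [h]; linear_combination hsum
          have hp' : y * (starRingEnd ℂ) y * x = -(b : ℂ) := by
            rw [h]; linear_combination hprod
          obtain ⟨h1, h2⟩ := pair_case' b hb y x hs' hp'
          have h3 : z.re = y.re := by rw [← h]; simp
          exact Or.inl ⟨h2, h1, by rw [h3]; exact h1⟩
    · rcases hcx with h | h | h
      · exact absurd h hx
      · -- pair (x, y)
        have hs' : x + (starRingEnd ℂ) x + z = 0 := by rw [h]; linear_combination hsum
        have hp' : x * (starRingEnd ℂ) x * z = -(b : ℂ) := by rw [h]; linear_combination hprod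
        obtain ⟨h1, h2⟩ := pair_case' b hb x z hs' hp'
        have h3 : y.re = x.re := by rw [← h]; simp
        exact Or.inr (Or.inr ⟨h1, by rw [h3]; exact h1, h2⟩)
      · -- pair (x, z)
        have hs' : x + (starRingEnd ℂ) x + y = 0 := by rw [h]; linear_combination hsum
        have hp' : x * (starRingEnd ℂ) x * y = -(b : ℂ) := by rw [h]; linear_combination hprod
        obtain ⟨h1, h2⟩ := pair_case' b hb x y hs' hp'
        have h3 : z.re = x.re := by rw [← h]; simp
        exact Or.inr (Or.inl ⟨h1, h2, by rw [h3]; exact h1⟩)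
  rw [hroots]
  rcases key with ⟨h1, h2, h3⟩ | ⟨h1, h2, h3⟩ | ⟨h1, h2, h3⟩ <;>
    simp [Multiset.filter_cons, Multiset.filter_singleton, h1, h2, h3,
      not_lt_of_gt, asymm, *]
end

section
/- Let z₁ ∈ ℂ with z₁ ≠ 0, and let α̂, Ω, V be reals with Ω²/V² − α̂² > 0. Then the 5×5 matrix with columns (0,0,1,0,0)ᵀ, (0,0,0,0,1)ᵀ, (1, z₁, z₁², 0, 0)ᵀ, (0, 1, 2z₁, 0, 0)ᵀ, (−α̂, 0, 0, sqrt(Ω²/V² − α̂²), 0)ᵀ is invertible. -/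
open Real Matrix

/-- Degenerate (repeated eigenvalue) case of the transversality computation: the 5×5
matrix with columns `b₁, b₂`, the eigenvector `(1, z₁, z₁², 0, 0)`, the generalized
eigenvector `(0, 1, 2z₁, 0, 0)`, and `e_α` is invertible. -/
theorem stmt_8 (z₁ : ℂ) (hz₁ : z₁ ≠ 0)
    (Ω V αh : ℝ) (hpos : 0 < Ω ^ 2 / V ^ 2 - αh ^ 2)
    (s : ℝ) (hs : s = Real.sqrt (Ω ^ 2 / V ^ 2 - αh ^ 2))
    (T : Matrix (Fin 5) (Fin 5) ℂ)
    (hT : T = Matrix.of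
      ![![0, 0, 1, 0, (-αh : ℂ)],
        ![0, 0, z₁, 1, 0],
        ![1, 0, z₁ ^ 2, 2 * z₁, 0],
        ![0, 0, 0, 0, (s : ℂ)],
        ![0, 1, 0, 0, 0]]) :
    IsUnit T := by
  have hs' : (s : ℂ) ≠ 0 := by
    have : s ≠ 0 := by rw [hs]; positivity
    exact_mod_cast this
  set B : Matrix (Fin 5) (Fin 5) ℂ := Matrix.of
      ![![z₁ ^ 2, -2 * z₁, 1, z₁ ^ 2 * αh / s, 0],
        ![0, 0, 0, 0, 1],
        ![1, 0, 0, (αh : ℂ) / s, 0],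
        ![-z₁, 1, 0, -(z₁ * αh) / s, 0],
        ![0, 0, 0, 1 / s, 0]] with hB
  refine (Matrix.isUnit_iff_isUnit_det T).mpr (Matrix.isUnit_det_of_right_inverse (B := B) ?_)
  ext i j
  subst hT
  fin_cases i <;> fin_cases j <;>
    (try simp [hB, Matrix.mul_apply, Fin.sum_univ_succ]) <;>
    (try field_simp) <;> (try ring)
end
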